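/- (Optimal Brain Surgeon solution.) Let H ∈ ℝ^{b×b} be symmetric positive definite, let w ∈ ℝ^{1×b} be a row of weights, and fix q ∈ {1,…,b}; note H⁻¹_{qq} > 0. Define δ⋆ := −(w_q / H⁻¹_{qq}) H⁻¹_{q:} ∈ ℝ^{1×b}, where H⁻¹_{q:} is the q-th row of H⁻¹. Then: (a) δ⋆ satisfies the constraint (δ⋆)_q = −w_q; (b) (1/2) δ⋆ H (δ⋆)ᵀ = (1/2) w_q² / H⁻¹_{qq}; and (c) for every row vector δ ∈ ℝ^{1×b} with δ_q = −w_q, one has (1/2) δ H δᵀ ≥ (1/2) w_q² / H⁻¹_{qq}. Thus δ⋆ minimizes (1/2) δ H δᵀ subject to δ e^q + w_q = 0, and the minimal value is S^{OBS}_q = (1/2) w_q² / H⁻¹_{qq}. -/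

import Mathlib

open Matrix BigOperators

/-- Optimal Brain Surgeon solution: for `H` symmetric positive definite,
`δ⋆ = −(w_q / H⁻¹_{qq}) H⁻¹_{q:}` is feasible, achieves loss
`(1/2) w_q² / H⁻¹_{qq}`, and this value is a lower bound for the loss of any
feasible `δ`. -/
theorem thanos_stmt4 (b : ℕ) (H : Matrix (Fin b) (Fin b) ℝ) (hH : H.PosDef)
    (w : Fin b → ℝ) (q : Fin b)
    (δstar : Fin b → ℝ) (hδstar : δstar = fun j => -(w q / H⁻¹ q q) * H⁻¹ q j) :
    0 < H⁻¹ q q ∧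
    δstar q = -(w q) ∧
    (1 / 2 : ℝ) * (δstar ⬝ᵥ H *ᵥ δstar) = (1 / 2 : ℝ) * (w q) ^ 2 / H⁻¹ q q ∧
    ∀ δ : Fin b → ℝ, δ q = -(w q) →
      (1 / 2 : ℝ) * (w q) ^ 2 / H⁻¹ q q ≤ (1 / 2 : ℝ) * (δ ⬝ᵥ H *ᵥ δ) := by
  have hinv : (H⁻¹).PosDef := hH.inv
  set A : ℝ := H⁻¹ q q with hA
  -- positivity of diagonal entry
  have hApos : 0 < A := by
    have := hinv.dotProduct_mulVec_pos (x := Pi.single q 1) (by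
      intro h
      have := congrFun h q
      simp at this)
    simpa [dotProduct, mulVec, Pi.single_apply, Finset.mul_sum] using this
  have hAne : A ≠ 0 := ne_of_gt hApos
  -- symmetry of H⁻¹
  have hsym : ∀ i j, H⁻¹ i j = H⁻¹ j i := by
    intro i j
    have := hinv.isHermitian
    have := congrFun (congrFun this.eq j) i
    simpa [Matrix.transpose_apply] using this
  have hdet : IsUnit H.det := isUnit_iff_ne_zero.mpr (ne_of_gt hH.det_pos)
  set u : Fin b → ℝ := fun j => H⁻¹ q j with hu
  -- key identity : H *ᵥ u = Pi.single q 1 (as the q-th column of 1)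
  have hHu : ∀ i, (H *ᵥ u) i = (1 : Matrix (Fin b) (Fin b) ℝ) i q := by
    intro i
    have : (H * H⁻¹) i q = (1 : Matrix (Fin b) (Fin b) ℝ) i q := by
      rw [Matrix.mul_nonsing_inv H hdet]
    calc (H *ᵥ u) i = ∑ j, H i j * H⁻¹ j q := by
          simp [mulVec, dotProduct, hu, hsym q]
      _ = (H * H⁻¹) i q := by simp [Matrix.mul_apply]
      _ = _ := this
  have key : ∀ v : Fin b → ℝ, v ⬝ᵥ H *ᵥ u = v q := by
    intro v
    calc v ⬝ᵥ H *ᵥ u = ∑ i, v i * (1 : Matrix (Fin b) (Fin b) ℝ) i q := by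
          simp [dotProduct, hHu]
      _ = v q := by simp [Matrix.one_apply]
  have key' : ∀ v : Fin b → ℝ, u ⬝ᵥ H *ᵥ v = v q := by
    intro v
    have hHsym : Hᵀ = H := hH.isHermitian.eq
    calc u ⬝ᵥ H *ᵥ v = H *ᵥ u ⬝ᵥ v := by
          rw [Matrix.dotProduct_mulVec, ← Matrix.mulVec_transpose, hHsym]
      _ = v ⬝ᵥ H *ᵥ u := by rw [dotProduct_comm]
      _ = v q := key v
  set c : ℝ := -(w q / A) with hc
  have hδc : δstar = c • u := by
    funext j; simp [hδstar, hc, hu, smul_eq_mul]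
  have huq : u q = A := by simp [hu, hA]
  have hfeas : δstar q = -(w q) := by
    rw [hδc]; simp [huq, hc]
    field_simp
  -- value at δstar
  have hval : δstar ⬝ᵥ H *ᵥ δstar = (w q) ^ 2 / A := by
    rw [hδc]
    rw [smul_dotProduct, Matrix.mulVec_smul, dotProduct_smul]
    rw [key u, huq]
    simp only [hc, smul_eq_mul]
    field_simp
  refine ⟨hApos, hfeas, by rw [hval]; ring, ?_⟩
  intro δ hδ
  set v : Fin b → ℝ := δ - δstar with hv
  have hvq : v q = 0 := by simp [hv, hδ, hfeas]
  have hsplit : δ ⬝ᵥ H *ᵥ δ = δstar ⬝ᵥ H *ᵥ δstar + v ⬝ᵥ H *ᵥ v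
      + (v ⬝ᵥ H *ᵥ δstar + δstar ⬝ᵥ H *ᵥ v) := by
    have hδv : δ = δstar + v := by simp [hv]
    rw [hδv]
    simp only [Matrix.mulVec_add, add_dotProduct, dotProduct_add]
    ring
  have hcross1 : v ⬝ᵥ H *ᵥ δstar = 0 := by
    rw [hδc, Matrix.mulVec_smul, dotProduct_smul, key v, hvq]; simp
  have hcross2 : δstar ⬝ᵥ H *ᵥ v = 0 := by
    rw [hδc, smul_dotProduct, key' v, hvq]; simp
  have hvv : 0 ≤ v ⬝ᵥ H *ᵥ v := by
    have := hH.posSemidef.dotProduct_mulVec_nonneg v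
    simpa using this
  have : (w q) ^ 2 / A ≤ δ ⬝ᵥ H *ᵥ δ := by
    rw [hsplit, hcross1, hcross2, hval]; linarith
  calc (1 / 2 : ℝ) * (w q) ^ 2 / A = (1 / 2 : ℝ) * ((w q) ^ 2 / A) := by ring
    _ ≤ (1 / 2 : ℝ) * (δ ⬝ᵥ H *ᵥ δ) := by linarith
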